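/- Let f(x_1,…,x_n) be a homogeneous symmetric polynomial of degree m in n variables whose expansion in Schur polynomials, f = Σ_{λ ⊢ m} d_λ s_λ(x_1,…,x_n), has nonnegative integer coefficients d_λ. Suppose gcd(m, n) = 1 and let ξ ∈ ℂ be a primitive n-th root of unity. Then for every integer k not divisible by n, f(1, ξ^k, ξ^{2k}, …, ξ^{(n−1)k}) = 0. -/

import Mathlib

open Finset Polynomial

/-- The cells of the skew shape `λ/μ`. -/
def skewCells (lam mu : YoungDiagram) : Finset (ℕ × ℕ) :=
  lam.cells \ mu.cells

/-- A semistandard Young tableau of skew shape `λ/μ`: a filling of the cells of `λ/μ`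
with positive integers, weakly increasing along rows and strictly increasing down columns.
Cells outside the shape carry the value `0`. -/
structure SkewSSYT (lam mu : YoungDiagram) where
  entry : ℕ → ℕ → ℕ
  pos' : ∀ i j, (i, j) ∈ skewCells lam mu → 0 < entry i j
  zeros' : ∀ i j, (i, j) ∉ skewCells lam mu → entry i j = 0
  row_weak' : ∀ i j1 j2, j1 < j2 → (i, j1) ∈ skewCells lam mu →
    (i, j2) ∈ skewCells lam mu → entry i j1 ≤ entry i j2
  col_strict' : ∀ i1 i2 j, i1 < i2 → (i1, j) ∈ skewCells lam mu →
    (i2, j) ∈ skewCells lam mu → entry i1 j < entry i2 j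

/-- `w_k(T)`: the number of entries of `T` equal to `k`. -/
def SkewSSYT.wt {lam mu : YoungDiagram} (T : SkewSSYT lam mu) (k : ℕ) : ℕ :=
  ((skewCells lam mu).filter fun c => T.entry c.1 c.2 = k).card

/-- `SSYT(λ/μ, n)`: semistandard skew tableaux of shape `λ/μ` with all entries at most `n`. -/
def SSYTbdd (lam mu : YoungDiagram) (n : ℕ) : Set (SkewSSYT lam mu) :=
  {T | ∀ i j, (i, j) ∈ skewCells lam mu → T.entry i j ≤ n}

/-- `SSYT(λ/μ, α)`: semistandard skew tableaux of shape `λ/μ` with exactly `α i`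
entries equal to `i + 1` for each `i : Fin n` (so content `α`, entries in `{1, …, n}`). -/
def SSYTcontent (lam mu : YoungDiagram) {n : ℕ} (α : Fin n → ℕ) : Set (SkewSSYT lam mu) :=
  {T | (∀ i : Fin n, T.wt ((i : ℕ) + 1) = α i) ∧
    ∀ i j, (i, j) ∈ skewCells lam mu → T.entry i j ≤ n}

/-- The cyclic shift `cyc_r(α)`, with `cyc r α i = α ((i + r) mod n)`. -/
def cyc {n : ℕ} (r : ℕ) (α : Fin n → ℕ) : Fin n → ℕ :=
  fun i => α ⟨((i : ℕ) + r) % n, Nat.mod_lt _ i.pos⟩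

/-- `z_r = Σ_j j ⬝ α_{j+r}` (indices mod `n`): the weighted sum of the shifted composition. -/
def zwt {n : ℕ} (α : Fin n → ℕ) (r : ℕ) : ℕ :=
  ∑ j : Fin n, ((j : ℕ) + 1) * cyc r α j

/-- `Σ_{j=1}^n j ⬝ w_j(T)`. -/
def weightedSum {lam mu : YoungDiagram} (n : ℕ) (T : SkewSSYT lam mu) : ℕ :=
  ∑ j : Fin n, ((j : ℕ) + 1) * T.wt ((j : ℕ) + 1)

/-- The (skew) Schur polynomial `s_{λ/μ}(x_1, …, x_n)` evaluated at `x`. -/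
noncomputable def skewSchurEval (lam mu : YoungDiagram) (n : ℕ) {R : Type*} [CommSemiring R]
    (x : Fin n → R) : R :=
  ∑ᶠ T ∈ SSYTbdd lam mu n, ∏ i : Fin n, x i ^ T.wt ((i : ℕ) + 1)

/-- `n(λ) = Σ_j (j - 1) λ_j`, i.e. the sum of the (0-indexed) row indices of the cells. -/
def nStat (lam : YoungDiagram) : ℕ :=
  ∑ c ∈ lam.cells, c.1
set_option linter.unusedSectionVars false
set_option linter.unusedVariables false

----------------------------------------------------------------
-- basics

lemma mem_skewCells_bot {lam : YoungDiagram} {c : ℕ × ℕ} :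
    c ∈ skewCells lam ⊥ ↔ c ∈ lam := by
  simp [skewCells, YoungDiagram.cells_bot, YoungDiagram.mem_cells]

lemma skewCells_bot (lam : YoungDiagram) : skewCells lam ⊥ = lam.cells := by
  ext c; simp [mem_skewCells_bot, YoungDiagram.mem_cells]

lemma SkewSSYT.ext' {lam mu : YoungDiagram} {T U : SkewSSYT lam mu}
    (h : T.entry = U.entry) : T = U := by
  cases T; cases U; cases h; rfl

namespace SkewSSYT

variable {lam : YoungDiagram} (T : SkewSSYT lam ⊥)

lemma mem_of_pos {r j : ℕ} (h : 0 < T.entry r j) : (r, j) ∈ lam := by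
  by_contra hc
  rw [T.zeros' r j (by rwa [mem_skewCells_bot])] at h
  exact absurd h (lt_irrefl 0)

lemma rowW {r j1 j2 : ℕ} (h : j1 ≤ j2) (hm : (r, j2) ∈ lam) :
    T.entry r j1 ≤ T.entry r j2 := by
  rcases eq_or_lt_of_le h with rfl | h
  · exact le_rfl
  · exact T.row_weak' r j1 j2 h (mem_skewCells_bot.mpr (lam.up_left_mem le_rfl h.le hm))
      (mem_skewCells_bot.mpr hm)

lemma colS {r1 r2 j : ℕ} (h : r1 < r2) (hm : (r2, j) ∈ lam) :
    T.entry r1 j < T.entry r2 j :=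
  T.col_strict' r1 r2 j h (mem_skewCells_bot.mpr (lam.up_left_mem h.le le_rfl hm))
    (mem_skewCells_bot.mpr hm)

end SkewSSYT

----------------------------------------------------------------
-- Bender–Knuth

namespace BK

variable {lam : YoungDiagram}

/-- A cell is *free* (for the Bender–Knuth move on values `v`, `v+1`). -/
def isFree (T : SkewSSYT lam ⊥) (v r j : ℕ) : Prop :=
  (r, j) ∈ lam ∧
    ((T.entry r j = v ∧ T.entry (r + 1) j ≠ v + 1) ∨
     (T.entry r j = v + 1 ∧ T.entry (r - 1) j ≠ v))

instance (T : SkewSSYT lam ⊥) (v r j : ℕ) : Decidable (isFree T v r j) := by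
  unfold isFree; infer_instance

variable (T : SkewSSYT lam ⊥) (v : ℕ)

def rowFree (r : ℕ) : Finset ℕ :=
  (Finset.range (lam.rowLen r)).filter fun j => isFree T v r j

def acnt (r : ℕ) : ℕ := ((rowFree T v r).filter fun j => T.entry r j = v).card

def bcnt (r : ℕ) : ℕ := ((rowFree T v r).filter fun j => T.entry r j = v + 1).card

def pos (r j : ℕ) : ℕ := ((rowFree T v r).filter fun j' => j' < j).card

def newEntry (r j : ℕ) : ℕ :=
  if isFree T v r j then (if pos T v r j < bcnt T v r then v else v + 1)
  else T.entry r j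

variable {T v}

lemma isFree.mem {r j : ℕ} (h : isFree T v r j) : (r, j) ∈ lam := h.1

lemma isFree.entry_eq {r j : ℕ} (h : isFree T v r j) :
    T.entry r j = v ∨ T.entry r j = v + 1 := h.2.imp And.left And.left

lemma mem_rowFree {r j : ℕ} : j ∈ rowFree T v r ↔ isFree T v r j := by
  unfold rowFree
  simp only [Finset.mem_filter, Finset.mem_range, and_iff_right_iff_imp]
  intro h
  exact YoungDiagram.mem_iff_lt_rowLen.mp h.mem

section hv
variable (hv : 1 ≤ v)
include hv

lemma mem_of_entry_v {r j : ℕ} (h : T.entry r j = v) : (r, j) ∈ lam :=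
  T.mem_of_pos (h ▸ hv)

lemma mem_of_entry_v1 {r j : ℕ} (h : T.entry r j = v + 1) : (r, j) ∈ lam :=
  T.mem_of_pos (h ▸ Nat.lt_of_lt_of_le hv (Nat.le_succ v))

/-- Below a free cell the entry is neither `v` nor `v+1`. -/
lemma free_below {r j : ℕ} (h : isFree T v r j) :
    T.entry (r + 1) j ≠ v ∧ T.entry (r + 1) j ≠ v + 1 := by
  have hev : T.entry r j = v ∨ T.entry r j = v + 1 := h.entry_eq
  constructor
  · intro hb
    have hmem : (r + 1, j) ∈ lam := mem_of_entry_v hv hb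
    have := T.colS (lt_add_one r) hmem
    omega
  · intro hb
    have hmem : (r + 1, j) ∈ lam := mem_of_entry_v1 hv hb
    have hcs := T.colS (lt_add_one r) hmem
    rcases h.2 with ⟨he, hne⟩ | ⟨he, _⟩ <;> omega

/-- Above a free cell (when it exists) the entry is neither `v` nor `v+1`. -/
lemma free_above {r j : ℕ} (hr : 0 < r) (h : isFree T v r j) :
    T.entry (r - 1) j ≠ v ∧ T.entry (r - 1) j ≠ v + 1 := by
  have hev : T.entry r j = v ∨ T.entry r j = v + 1 := h.entry_eq
  have hlt : r - 1 < r := Nat.sub_lt hr Nat.one_pos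
  constructor
  · intro ha
    have hcs := T.colS hlt h.mem
    rcases h.2 with ⟨he, _⟩ | ⟨he, hne⟩ <;> omega
  · intro ha
    have hcs := T.colS hlt h.mem
    omega

/-- A non-free cell with entry `v` has a `v+1` directly below. -/
lemma nonfree_v {r j : ℕ} (hm : (r, j) ∈ lam) (he : T.entry r j = v)
    (h : ¬ isFree T v r j) : T.entry (r + 1) j = v + 1 := by
  unfold isFree at h
  push_neg at h
  rcases (h hm) with ⟨h1, _⟩
  by_contra hb
  exact hb (h1 he)

/-- A non-free cell with entry `v+1` has row `> 0` and a `v` directly above. -/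
lemma nonfree_v1 {r j : ℕ} (hm : (r, j) ∈ lam) (he : T.entry r j = v + 1)
    (h : ¬ isFree T v r j) : 0 < r ∧ T.entry (r - 1) j = v := by
  unfold isFree at h
  push_neg at h
  rcases (h hm) with ⟨_, h2⟩
  have hv' : T.entry (r - 1) j = v := h2 he
  refine ⟨?_, hv'⟩
  rcases Nat.eq_zero_or_pos r with rfl | hr
  · simp only [Nat.zero_sub] at hv'; omega
  · exact hr

end hv

end BK

namespace BK

variable {lam : YoungDiagram} {T : SkewSSYT lam ⊥} {v : ℕ}

lemma free_entry_v1_mono {r j1 j2 : ℕ} (h1 : isFree T v r j1) (h2 : isFree T v r j2)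
    (hj : j1 ≤ j2) (he : T.entry r j1 = v + 1) : T.entry r j2 = v + 1 := by
  have := T.rowW hj h2.mem
  rcases h2.entry_eq with h | h <;> omega

lemma pos_lt_acnt {r j : ℕ} (h : isFree T v r j) (he : T.entry r j = v) :
    pos T v r j < acnt T v r := by
  classical
  have hsub : (rowFree T v r).filter (fun j' => j' < j) ⊆
      ((rowFree T v r).filter fun j' => T.entry r j' = v).erase j := by
    intro j' hj'
    rw [Finset.mem_filter] at hj'
    obtain ⟨hf', hlt⟩ := hj'
    have hfree' := mem_rowFree.mp hf'
    have hle : T.entry r j' ≤ T.entry r j := T.rowW hlt.le h.mem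
    have hev : T.entry r j' = v := by rcases hfree'.entry_eq with h' | h' <;> omega
    rw [Finset.mem_erase]
    exact ⟨hlt.ne, Finset.mem_filter.mpr ⟨hf', hev⟩⟩
  have hjmem : j ∈ (rowFree T v r).filter fun j' => T.entry r j' = v :=
    Finset.mem_filter.mpr ⟨mem_rowFree.mpr h, he⟩
  have h1 : pos T v r j ≤ (((rowFree T v r).filter fun j' => T.entry r j' = v).erase j).card :=
    Finset.card_le_card hsub
  rw [Finset.card_erase_of_mem hjmem] at h1
  have h2 : 0 < acnt T v r := Finset.card_pos.mpr ⟨j, hjmem⟩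
  unfold acnt at *
  omega

lemma acnt_le_pos {r j : ℕ} (h : isFree T v r j) (he : T.entry r j = v + 1) :
    acnt T v r ≤ pos T v r j := by
  apply Finset.card_le_card
  intro j' hj'
  rw [Finset.mem_filter] at hj' ⊢
  obtain ⟨hf', he'⟩ := hj'
  refine ⟨hf', ?_⟩
  by_contra hge
  push_neg at hge
  have := free_entry_v1_mono h (mem_rowFree.mp hf') hge he
  omega

lemma pos_mono {r j1 j2 : ℕ} (h : j1 ≤ j2) : pos T v r j1 ≤ pos T v r j2 := by
  apply Finset.card_le_card
  intro j' hj'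
  rw [Finset.mem_filter] at hj' ⊢
  exact ⟨hj'.1, lt_of_lt_of_le hj'.2 h⟩

lemma acnt_add_bcnt (r : ℕ) : acnt T v r + bcnt T v r = (rowFree T v r).card := by
  classical
  have h := Finset.card_filter_add_card_filter_not (s := rowFree T v r)
    (p := fun j => T.entry r j = v)
  have heq : ((rowFree T v r).filter fun j => ¬ T.entry r j = v)
      = (rowFree T v r).filter fun j => T.entry r j = v + 1 := by
    apply Finset.filter_congr
    intro j hj
    have := (mem_rowFree.mp hj).entry_eq
    constructor
    · intro h'; omega
    · intro h'; omega
  rw [heq] at h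
  exact h

lemma card_filter_pos_lt (F : Finset ℕ) (t : ℕ) (ht : t ≤ F.card) :
    (F.filter fun j => (F.filter fun j' => j' < j).card < t).card = t := by
  classical
  set c := F.card with hc
  let e : Fin c ≃o F := F.orderIsoOfFin hc.symm
  have hinj : Function.Injective fun k : Fin c => ((e k : ℕ)) := by
    intro k1 k2 h
    exact e.injective (Subtype.ext h)
  have key : ∀ k : Fin c, (F.filter fun j' => j' < (e k : ℕ)).card = (k : ℕ) := by
    intro k
    have himg : (F.filter fun j' => j' < (e k : ℕ))
        = (Finset.Iio k).image fun k' => ((e k' : ℕ)) := by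
      ext j
      simp only [Finset.mem_filter, Finset.mem_image, Finset.mem_Iio]
      constructor
      · rintro ⟨hjF, hlt⟩
        refine ⟨e.symm ⟨j, hjF⟩, ?_, by simp⟩
        rw [← e.lt_iff_lt, e.apply_symm_apply]
        exact Subtype.mk_lt_mk.mpr hlt
      · rintro ⟨k', hk', rfl⟩
        exact ⟨(e k').2, Subtype.mk_lt_mk.mp (e.lt_iff_lt.mpr hk')⟩
    rw [himg, Finset.card_image_of_injective _ hinj, Fin.card_Iio]
  have hmain : (F.filter fun j => (F.filter fun j' => j' < j).card < t)
      = (Finset.filter (fun k : Fin c => (k : ℕ) < t) Finset.univ).image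
          fun k => ((e k : ℕ)) := by
    ext j
    simp only [Finset.mem_filter, Finset.mem_image, Finset.mem_univ, true_and]
    constructor
    · rintro ⟨hjF, hlt⟩
      refine ⟨e.symm ⟨j, hjF⟩, ?_, by simp⟩
      have h5 : (F.filter fun j' => j' < j).card = ((e.symm ⟨j, hjF⟩ : Fin c) : ℕ) := by
        have h6 := key (e.symm ⟨j, hjF⟩)
        rw [e.apply_symm_apply] at h6
        exact h6
      omega
    · rintro ⟨k, hk, rfl⟩
      exact ⟨(e k).2, by rw [key k]; exact hk⟩
  rw [hmain, Finset.card_image_of_injective _ hinj]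
  refine (Finset.card_bij' (fun (k : Fin c) _ => (k : ℕ))
    (fun j hj => (⟨j, lt_of_lt_of_le (Finset.mem_range.mp hj) ht⟩ : Fin c)) ?_ ?_ ?_ ?_).trans
    (Finset.card_range t)
  · intro k hk
    simp only [Finset.mem_filter, Finset.mem_univ, true_and] at hk
    exact Finset.mem_range.mpr hk
  · intro j hj
    simp only [Finset.mem_filter, Finset.mem_univ, true_and]
    exact Finset.mem_range.mp hj
  · intro k _
    exact Fin.ext rfl
  · intro j _
    rfl

lemma card_newv_row (r : ℕ) :
    ((rowFree T v r).filter fun j => pos T v r j < bcnt T v r).card = bcnt T v r :=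
  card_filter_pos_lt (rowFree T v r) (bcnt T v r) (Finset.card_filter_le _ _)

lemma card_newv1_row (r : ℕ) :
    ((rowFree T v r).filter fun j => ¬ pos T v r j < bcnt T v r).card = acnt T v r := by
  classical
  have h1 := Finset.card_filter_add_card_filter_not (s := rowFree T v r)
    (p := fun j => pos T v r j < bcnt T v r)
  have h2 := card_newv_row (T := T) (v := v) r
  have h3 := acnt_add_bcnt (T := T) (v := v) r
  omega

end BK

namespace BK

variable {lam : YoungDiagram} {T : SkewSSYT lam ⊥} {v : ℕ}

lemma newEntry_of_not_free {r j : ℕ} (h : ¬ isFree T v r j) :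
    newEntry T v r j = T.entry r j := by rw [newEntry, if_neg h]

section hv
variable (hv : 1 ≤ v)
include hv

lemma new_row_weak {r j1 j2 : ℕ} (hj : j1 < j2) (hm2 : (r, j2) ∈ lam) :
    newEntry T v r j1 ≤ newEntry T v r j2 := by
  have hm1 : (r, j1) ∈ lam := lam.up_left_mem le_rfl hj.le hm2
  by_cases h1 : isFree T v r j1 <;> by_cases h2 : isFree T v r j2
  · rw [newEntry, if_pos h1, newEntry, if_pos h2]
    by_cases hp : pos T v r j1 < bcnt T v r
    · rw [if_pos hp]
      split <;> omega
    · rw [if_neg hp]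
      have hmono := pos_mono (T := T) (v := v) (r := r) hj.le
      rw [if_neg (by omega)]
  · rw [newEntry, if_pos h1, newEntry, if_neg h2]
    have h3 := T.rowW hj.le hm2
    have hge : v ≤ T.entry r j2 := by
      rcases h1.entry_eq with h' | h' <;> omega
    split
    · exact hge
    · rcases Nat.lt_or_ge v (T.entry r j2) with h' | h'
      · omega
      · exfalso
        have he2 : T.entry r j2 = v := by omega
        rcases h1.entry_eq with he1 | he1
        · have hb2 : T.entry (r + 1) j2 = v + 1 := nonfree_v hv hm2 he2 h2
          have hmb2 : (r + 1, j2) ∈ lam := mem_of_entry_v1 hv hb2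
          have hmb1 : (r + 1, j1) ∈ lam := lam.up_left_mem le_rfl hj.le hmb2
          have h4 : T.entry (r + 1) j1 ≤ T.entry (r + 1) j2 := T.rowW hj.le hmb2
          have h5 := free_below hv h1
          have h6 : T.entry r j1 < T.entry (r + 1) j1 := T.colS (lt_add_one r) hmb1
          omega
        · omega
  · rw [newEntry, if_neg h1, newEntry, if_pos h2]
    have hle : T.entry r j1 ≤ T.entry r j2 := T.rowW hj.le hm2
    have h2e := h2.entry_eq
    split
    · rcases Nat.lt_or_ge (T.entry r j1) (v + 1) with h' | h'
      · omega
      · exfalso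
        have he1 : T.entry r j1 = v + 1 := by omega
        obtain ⟨hr, ha1⟩ := nonfree_v1 hv hm1 he1 h1
        have he2 : T.entry r j2 = v + 1 := by omega
        have ha2 : T.entry (r - 1) j2 ≠ v := by
          rcases h2.2 with ⟨h'', _⟩ | ⟨_, h''⟩
          · omega
          · exact h''
        have hm1' : (r - 1, j2) ∈ lam := lam.up_left_mem (Nat.sub_le r 1) le_rfl hm2
        have h4 : T.entry (r - 1) j1 ≤ T.entry (r - 1) j2 := T.rowW hj.le hm1'
        have h5 : T.entry (r - 1) j2 < T.entry r j2 := T.colS (Nat.sub_lt hr one_pos) hm2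
        omega
    · omega
  · rw [newEntry, if_neg h1, newEntry, if_neg h2]
    exact T.rowW hj.le hm2

lemma new_col_strict_adj {r j : ℕ} (hm : (r + 1, j) ∈ lam) :
    newEntry T v r j < newEntry T v (r + 1) j := by
  have hm1 : (r, j) ∈ lam := lam.up_left_mem (Nat.le_succ r) le_rfl hm
  by_cases h1 : isFree T v r j
  · have h5 := free_below hv h1
    have h6 : T.entry r j < T.entry (r + 1) j := T.colS (lt_add_one r) hm
    have h1e := h1.entry_eq
    have h2 : ¬ isFree T v (r + 1) j := fun h => by
      rcases h.entry_eq with h' | h' <;> omega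
    rw [newEntry, if_pos h1, newEntry, if_neg h2]
    split <;> omega
  · by_cases h2 : isFree T v (r + 1) j
    · have h5 := free_above hv (Nat.succ_pos r) h2
      rw [Nat.succ_sub_one] at h5
      have h6 : T.entry r j < T.entry (r + 1) j := T.colS (lt_add_one r) hm
      have h2e := h2.entry_eq
      rw [newEntry, if_neg h1, newEntry, if_pos h2]
      split <;> omega
    · rw [newEntry, if_neg h1, newEntry, if_neg h2]
      exact T.colS (lt_add_one r) hm

lemma new_col_strict {r1 r2 j : ℕ} (h : r1 < r2) (hm : (r2, j) ∈ lam) :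
    newEntry T v r1 j < newEntry T v r2 j := by
  induction r2, h using Nat.le_induction with
  | base => exact new_col_strict_adj hv hm
  | succ r2 hr ih =>
      have hm2 : (r2, j) ∈ lam := lam.up_left_mem (Nat.le_succ r2) le_rfl hm
      exact lt_trans (ih hm2) (new_col_strict_adj hv hm)

end hv

/-- The Bender–Knuth involution on semistandard Young tableaux. -/
def bk (T : SkewSSYT lam ⊥) (v : ℕ) (hv : 1 ≤ v) : SkewSSYT lam ⊥ where
  entry := newEntry T v
  pos' := by
    intro r j _
    by_cases h : isFree T v r j
    · rw [newEntry, if_pos h]; split <;> omega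
    · rw [newEntry, if_neg h]; exact T.pos' r j ‹_›
  zeros' := by
    intro r j hmem
    rw [mem_skewCells_bot] at hmem
    have h : ¬ isFree T v r j := fun hf => hmem hf.mem
    rw [newEntry, if_neg h]
    exact T.zeros' r j (by rwa [mem_skewCells_bot])
  row_weak' := fun r j1 j2 hj _ hm2 => new_row_weak hv hj (mem_skewCells_bot.mp hm2)
  col_strict' := fun r1 r2 j h _ hm2 => new_col_strict hv h (mem_skewCells_bot.mp hm2)

variable (hv : 1 ≤ v)

lemma bk_entry : (bk T v hv).entry = newEntry T v := rfl

lemma bk_mem_bdd {n : ℕ} (hn : v + 1 ≤ n) (hT : T ∈ SSYTbdd lam ⊥ n) :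
    bk T v hv ∈ SSYTbdd lam ⊥ n := by
  intro r j hm
  show newEntry T v r j ≤ n
  by_cases h : isFree T v r j
  · rw [newEntry, if_pos h]; split <;> omega
  · rw [newEntry, if_neg h]; exact hT r j hm

end BK

namespace BK

variable {lam : YoungDiagram} {T : SkewSSYT lam ⊥} {v : ℕ}

lemma wt_eq (T : SkewSSYT lam ⊥) (w : ℕ) :
    T.wt w = (lam.cells.filter fun c => T.entry c.1 c.2 = w).card := by
  rw [SkewSSYT.wt, skewCells_bot]

/-- Fiber a count of free cells over the rows. -/
lemma card_free_filter (Q : ℕ → ℕ → Prop) [∀ r j : ℕ, Decidable (Q r j)] :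
    (lam.cells.filter fun c => isFree T v c.1 c.2 ∧ Q c.1 c.2).card
      = ∑ r ∈ lam.cells.image Prod.fst, ((rowFree T v r).filter fun j => Q r j).card := by
  classical
  rw [Finset.card_eq_sum_card_fiberwise
    (f := Prod.fst) (t := lam.cells.image Prod.fst)
    (fun c hc => Finset.mem_image_of_mem Prod.fst (Finset.filter_subset _ _ hc))]
  apply Finset.sum_congr rfl
  intro r _
  refine Finset.card_bij' (fun c _ => c.2) (fun j _ => (r, j)) ?_ ?_ ?_ ?_
  · intro c hc
    simp only [Finset.mem_filter, YoungDiagram.mem_cells] at hc ⊢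
    obtain ⟨⟨_, hfree, hQ⟩, hfst⟩ := hc
    subst hfst
    exact ⟨mem_rowFree.mpr hfree, hQ⟩
  · intro j hj
    simp only [Finset.mem_filter, YoungDiagram.mem_cells] at hj
    obtain ⟨hf, hQ⟩ := hj
    have hfree := mem_rowFree.mp hf
    rw [Finset.mem_filter, Finset.mem_filter, YoungDiagram.mem_cells]
    exact ⟨⟨hfree.mem, hfree, hQ⟩, rfl⟩
  · intro c hc
    simp only [Finset.mem_filter] at hc
    exact Prod.ext hc.2.symm rfl
  · intro j _
    rfl

lemma card_split (p : ℕ × ℕ → Prop) [DecidablePred p] :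
    (lam.cells.filter p).card
      = (lam.cells.filter fun c => isFree T v c.1 c.2 ∧ p c).card
        + (lam.cells.filter fun c => ¬ isFree T v c.1 c.2 ∧ p c).card := by
  classical
  have key := Finset.card_filter_add_card_filter_not
    (p := fun c : ℕ × ℕ => isFree T v c.1 c.2) (s := lam.cells.filter p)
  rw [Finset.filter_filter, Finset.filter_filter] at key
  have h1 : (lam.cells.filter fun a => p a ∧ isFree T v a.1 a.2)
      = lam.cells.filter fun c => isFree T v c.1 c.2 ∧ p c := by
    ext c; simp only [Finset.mem_filter]; tauto
  have h2 : (lam.cells.filter fun a => p a ∧ ¬ isFree T v a.1 a.2)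
      = lam.cells.filter fun c => ¬ isFree T v c.1 c.2 ∧ p c := by
    ext c; simp only [Finset.mem_filter]; tauto
  rw [h1, h2] at key
  omega

variable (hv : 1 ≤ v)
include hv

lemma nf_card_eq :
    (lam.cells.filter fun c => ¬ isFree T v c.1 c.2 ∧ T.entry c.1 c.2 = v).card
      = (lam.cells.filter fun c => ¬ isFree T v c.1 c.2 ∧ T.entry c.1 c.2 = v + 1).card := by
  apply Finset.card_nbij' (i := fun c => (c.1 + 1, c.2)) (j := fun c => (c.1 - 1, c.2))
  · intro c hc
    simp only [Finset.mem_coe, Finset.mem_filter, YoungDiagram.mem_cells] at hc ⊢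
    obtain ⟨hm, hnf, he⟩ := hc
    have hb := nonfree_v hv hm he hnf
    have hmb : (c.1 + 1, c.2) ∈ lam := mem_of_entry_v1 hv hb
    refine ⟨hmb, ?_, hb⟩
    intro hf
    rcases hf.2 with ⟨h', _⟩ | ⟨_, h'⟩
    · omega
    · rw [Nat.add_sub_cancel] at h'
      exact h' he
  · intro c hc
    simp only [Finset.mem_coe, Finset.mem_filter, YoungDiagram.mem_cells] at hc ⊢
    obtain ⟨hm, hnf, he⟩ := hc
    obtain ⟨hr, ha⟩ := nonfree_v1 hv hm he hnf
    have hma : (c.1 - 1, c.2) ∈ lam := lam.up_left_mem (Nat.sub_le c.1 1) le_rfl hm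
    refine ⟨hma, ?_, ha⟩
    intro hf
    rcases hf.2 with ⟨_, h'⟩ | ⟨h', _⟩
    · rw [Nat.sub_add_cancel hr] at h'
      exact h' he
    · omega
  · intro c hc
    simp only [Finset.mem_coe, Finset.mem_filter, YoungDiagram.mem_cells] at hc
    exact Prod.ext (show c.1 + 1 - 1 = c.1 by omega) rfl
  · intro c hc
    simp only [Finset.mem_coe, Finset.mem_filter, YoungDiagram.mem_cells] at hc
    obtain ⟨hm, hnf, he⟩ := hc
    obtain ⟨hr, _⟩ := nonfree_v1 hv hm he hnf
    exact Prod.ext (Nat.sub_add_cancel hr) rfl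

lemma wt_bk_v : (bk T v hv).wt v = T.wt (v + 1) := by
  classical
  rw [wt_eq, wt_eq,
    card_split (T := T) (v := v) (fun c => (bk T v hv).entry c.1 c.2 = v),
    card_split (T := T) (v := v) (fun c => T.entry c.1 c.2 = v + 1)]
  congr 1
  · -- free parts
    have e1 : (lam.cells.filter fun c => isFree T v c.1 c.2 ∧ (bk T v hv).entry c.1 c.2 = v)
        = lam.cells.filter fun c => isFree T v c.1 c.2 ∧ pos T v c.1 c.2 < bcnt T v c.1 := by
      apply Finset.filter_congr
      intro c _
      constructor
      · rintro ⟨hf, he⟩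
        refine ⟨hf, ?_⟩
        rw [bk_entry, newEntry, if_pos hf] at he
        by_contra hp
        rw [if_neg hp] at he
        omega
      · rintro ⟨hf, hp⟩
        refine ⟨hf, ?_⟩
        rw [bk_entry, newEntry, if_pos hf, if_pos hp]
    have e2 : (lam.cells.filter fun c => isFree T v c.1 c.2 ∧ T.entry c.1 c.2 = v + 1)
        = lam.cells.filter fun c => isFree T v c.1 c.2 ∧ T.entry c.1 c.2 = v + 1 := rfl
    rw [e1]
    rw [card_free_filter (T := T) (v := v) (Q := fun r j => pos T v r j < bcnt T v r),
      card_free_filter (T := T) (v := v) (Q := fun r j => T.entry r j = v + 1)]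
    apply Finset.sum_congr rfl
    intro r _
    exact (card_newv_row (T := T) (v := v) r).trans rfl
  · -- non-free parts
    have e1 : (lam.cells.filter fun c => ¬ isFree T v c.1 c.2 ∧ (bk T v hv).entry c.1 c.2 = v)
        = lam.cells.filter fun c => ¬ isFree T v c.1 c.2 ∧ T.entry c.1 c.2 = v := by
      apply Finset.filter_congr
      intro c _
      rw [bk_entry, newEntry]
      constructor
      · rintro ⟨hf, he⟩
        rw [if_neg hf] at he
        exact ⟨hf, he⟩
      · rintro ⟨hf, he⟩
        rw [if_neg hf]
        exact ⟨hf, he⟩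
    rw [e1]
    exact nf_card_eq hv

lemma wt_bk_v1 : (bk T v hv).wt (v + 1) = T.wt v := by
  classical
  rw [wt_eq, wt_eq,
    card_split (T := T) (v := v) (fun c => (bk T v hv).entry c.1 c.2 = v + 1),
    card_split (T := T) (v := v) (fun c => T.entry c.1 c.2 = v)]
  congr 1
  · have e1 : (lam.cells.filter fun c => isFree T v c.1 c.2 ∧ (bk T v hv).entry c.1 c.2 = v + 1)
        = lam.cells.filter fun c => isFree T v c.1 c.2 ∧ ¬ pos T v c.1 c.2 < bcnt T v c.1 := by
      apply Finset.filter_congr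
      intro c _
      constructor
      · rintro ⟨hf, he⟩
        refine ⟨hf, ?_⟩
        rw [bk_entry, newEntry, if_pos hf] at he
        by_contra hp
        rw [if_pos hp] at he
        omega
      · rintro ⟨hf, hp⟩
        refine ⟨hf, ?_⟩
        rw [bk_entry, newEntry, if_pos hf, if_neg hp]
    rw [e1]
    rw [card_free_filter (T := T) (v := v) (Q := fun r j => ¬ pos T v r j < bcnt T v r),
      card_free_filter (T := T) (v := v) (Q := fun r j => T.entry r j = v)]
    apply Finset.sum_congr rfl
    intro r _
    exact card_newv1_row (T := T) (v := v) r
  · have e1 : (lam.cells.filter fun c => ¬ isFree T v c.1 c.2 ∧ (bk T v hv).entry c.1 c.2 = v + 1)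
        = lam.cells.filter fun c => ¬ isFree T v c.1 c.2 ∧ T.entry c.1 c.2 = v + 1 := by
      apply Finset.filter_congr
      intro c _
      rw [bk_entry, newEntry]
      constructor
      · rintro ⟨hf, he⟩
        rw [if_neg hf] at he
        exact ⟨hf, he⟩
      · rintro ⟨hf, he⟩
        rw [if_neg hf]
        exact ⟨hf, he⟩
    rw [e1]
    exact (nf_card_eq hv).symm

omit hv in
lemma wt_bk_ne (hv : 1 ≤ v) {w : ℕ} (hw1 : w ≠ v) (hw2 : w ≠ v + 1) :
    (bk T v hv).wt w = T.wt w := by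
  classical
  rw [wt_eq, wt_eq]
  congr 1
  apply Finset.filter_congr
  intro c _
  rw [bk_entry, newEntry]
  by_cases h : isFree T v c.1 c.2
  · rw [if_pos h]
    have he := h.entry_eq
    constructor
    · intro h'
      split at h' <;> omega
    · intro h'
      omega
  · rw [if_neg h]

end BK

namespace BK

variable {lam : YoungDiagram} {T : SkewSSYT lam ⊥} {v : ℕ}

variable (hv : 1 ≤ v)
include hv

lemma isFree_bk_of_isFree {r j : ℕ} (h : isFree T v r j) :
    isFree (bk T v hv) v r j := by
  refine ⟨h.mem, ?_⟩
  rw [bk_entry]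
  by_cases hp : pos T v r j < bcnt T v r
  · left
    refine ⟨by rw [newEntry, if_pos h, if_pos hp], ?_⟩
    have h5 := free_below hv h
    have hnf : ¬ isFree T v (r + 1) j := fun hf => by
      rcases hf.entry_eq with h' | h' <;> omega
    rw [newEntry_of_not_free hnf]
    exact h5.2
  · right
    refine ⟨by rw [newEntry, if_pos h, if_neg hp], ?_⟩
    rcases Nat.eq_zero_or_pos r with rfl | hr
    · rw [Nat.zero_sub, newEntry, if_pos h, if_neg hp]
      omega
    · have h5 := free_above hv hr h
      have hnf : ¬ isFree T v (r - 1) j := fun hf => by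
        rcases hf.entry_eq with h' | h' <;> omega
      rw [newEntry_of_not_free hnf]
      exact h5.1

lemma not_isFree_bk_of_not_isFree {r j : ℕ} (h : ¬ isFree T v r j) :
    ¬ isFree (bk T v hv) v r j := by
  intro hf
  rcases Decidable.em ((r, j) ∈ lam) with hm | hm
  · have he' : (bk T v hv).entry r j = T.entry r j := newEntry_of_not_free h
    rcases hf.2 with ⟨h1, h2⟩ | ⟨h1, h2⟩
    · -- entry r j = v, below must be v+1 and unchanged
      rw [he'] at h1
      have hb := nonfree_v hv hm h1 h
      have hnf : ¬ isFree T v (r + 1) j := by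
        intro hfb
        rcases hfb.2 with ⟨h', _⟩ | ⟨_, h'⟩
        · omega
        · rw [Nat.add_sub_cancel] at h'
          exact h' h1
      rw [bk_entry, newEntry_of_not_free hnf] at h2
      exact h2 hb
    · rw [he'] at h1
      obtain ⟨hr, ha⟩ := nonfree_v1 hv hm h1 h
      have hnf : ¬ isFree T v (r - 1) j := by
        intro hfa
        rcases hfa.2 with ⟨_, h'⟩ | ⟨h', _⟩
        · rw [Nat.sub_add_cancel hr] at h'
          exact h' h1
        · omega
      rw [bk_entry, newEntry_of_not_free hnf] at h2
      exact h2 ha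
  · exact hm hf.mem

lemma isFree_bk_iff {r j : ℕ} : isFree (bk T v hv) v r j ↔ isFree T v r j := by
  constructor
  · intro h
    by_contra hc
    exact not_isFree_bk_of_not_isFree hv hc h
  · exact isFree_bk_of_isFree hv

lemma rowFree_bk (r : ℕ) : rowFree (bk T v hv) v r = rowFree T v r := by
  unfold rowFree
  apply Finset.filter_congr
  intro j _
  simp only [isFree_bk_iff hv]

lemma pos_bk (r j : ℕ) : pos (bk T v hv) v r j = pos T v r j := by
  unfold pos
  rw [rowFree_bk hv]

lemma bcnt_bk (r : ℕ) : bcnt (bk T v hv) v r = acnt T v r := by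
  unfold bcnt
  rw [rowFree_bk hv]
  have heq : ((rowFree T v r).filter fun j => (bk T v hv).entry r j = v + 1)
      = (rowFree T v r).filter fun j => ¬ pos T v r j < bcnt T v r := by
    apply Finset.filter_congr
    intro j hj
    have hf := mem_rowFree.mp hj
    rw [bk_entry, newEntry, if_pos hf]
    constructor
    · intro h'
      split at h' <;> omega
    · intro h'
      rw [if_neg h']
  rw [heq]
  exact card_newv1_row (T := T) (v := v) r

lemma bk_bk : bk (bk T v hv) v hv = T := by
  apply SkewSSYT.ext'
  funext r
  funext j
  show newEntry (bk T v hv) v r j = T.entry r j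
  by_cases h : isFree T v r j
  · rw [newEntry, if_pos ((isFree_bk_iff hv).mpr h), pos_bk hv, bcnt_bk hv]
    rcases h.entry_eq with he | he
    · rw [if_pos (pos_lt_acnt h he), he]
    · rw [if_neg (not_lt.mpr (acnt_le_pos h he)), he]
  · rw [newEntry_of_not_free (not_isFree_bk_of_not_isFree hv h)]
    exact newEntry_of_not_free h

end BK

----------------------------------------------------------------
-- Evaluation machinery

lemma finite_SSYTbdd (lam mu : YoungDiagram) (n : ℕ) : (SSYTbdd lam mu n).Finite := by
  classical
  rw [← Set.finite_coe_iff]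
  let F : SSYTbdd lam mu n → ({ c // c ∈ skewCells lam mu } → Fin (n + 1)) :=
    fun T c => ⟨T.1.entry c.1.1 c.1.2, Nat.lt_succ_of_le (T.2 c.1.1 c.1.2 c.2)⟩
  have hinj : Function.Injective F := by
    intro T U h
    apply Subtype.ext
    apply SkewSSYT.ext'
    funext r j
    by_cases hm : (r, j) ∈ skewCells lam mu
    · have := congrFun h ⟨(r, j), hm⟩
      simpa [F, Fin.mk.injEq] using this
    · rw [T.1.zeros' r j hm, U.1.zeros' r j hm]
  exact Finite.of_injective F hinj

noncomputable def bddFinset (lam mu : YoungDiagram) (n : ℕ) : Finset (SkewSSYT lam mu) :=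
  (finite_SSYTbdd lam mu n).toFinset

lemma mem_bddFinset {lam mu : YoungDiagram} {n : ℕ} {T : SkewSSYT lam mu} :
    T ∈ bddFinset lam mu n ↔ T ∈ SSYTbdd lam mu n :=
  Set.Finite.mem_toFinset _

lemma skewSchurEval_eq_sum (lam mu : YoungDiagram) (n : ℕ) (x : Fin n → ℂ) :
    skewSchurEval lam mu n x
      = ∑ T ∈ bddFinset lam mu n, ∏ i : Fin n, x i ^ T.wt ((i : ℕ) + 1) := by
  rw [skewSchurEval, ← Set.Finite.coe_toFinset (finite_SSYTbdd lam mu n),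
    finsum_mem_coe_finset]
  rfl

lemma sum_wt_eq_card (lam : YoungDiagram) {n : ℕ} (hn : 0 < n) {T : SkewSSYT lam ⊥}
    (hT : T ∈ SSYTbdd lam ⊥ n) :
    ∑ i : Fin n, T.wt ((i : ℕ) + 1) = lam.card := by
  classical
  have hcard := Finset.card_eq_sum_card_fiberwise
    (f := fun c : ℕ × ℕ => (⟨min (T.entry c.1 c.2 - 1) (n - 1), by omega⟩ : Fin n))
    (s := lam.cells) (t := Finset.univ) (fun c _ => Finset.mem_univ _)
  rw [YoungDiagram.card, hcard]
  apply Finset.sum_congr rfl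
  intro i _
  rw [BK.wt_eq]
  congr 1
  apply Finset.filter_congr
  intro c hc
  have hmem : (c.1, c.2) ∈ skewCells lam ⊥ := by
    rw [mem_skewCells_bot, YoungDiagram.mem_cells] at *
    exact hc
  have h1 : 0 < T.entry c.1 c.2 := T.pos' c.1 c.2 hmem
  have h2 : T.entry c.1 c.2 ≤ n := hT c.1 c.2 hmem
  have hi : (i : ℕ) < n := i.2
  constructor
  · intro h
    exact Fin.ext (show min (T.entry c.1 c.2 - 1) (n - 1) = (i : ℕ) by omega)
  · intro h
    have hval : min (T.entry c.1 c.2 - 1) (n - 1) = (i : ℕ) := congrArg Fin.val h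
    omega

lemma skewSchurEval_smul (lam : YoungDiagram) {n : ℕ} (hn : 0 < n) (c : ℂ) (x : Fin n → ℂ) :
    skewSchurEval lam ⊥ n (fun i => c * x i)
      = c ^ lam.card * skewSchurEval lam ⊥ n x := by
  rw [skewSchurEval_eq_sum, skewSchurEval_eq_sum, Finset.mul_sum]
  apply Finset.sum_congr rfl
  intro T hT
  have hTm : T ∈ SSYTbdd lam ⊥ n := mem_bddFinset.mp hT
  rw [← sum_wt_eq_card lam hn hTm]
  simp_rw [mul_pow]
  rw [Finset.prod_mul_distrib, Finset.prod_pow_eq_pow_sum]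

lemma skewSchurEval_swap (lam : YoungDiagram) {n : ℕ} (p q : Fin n)
    (hpq : (q : ℕ) = (p : ℕ) + 1) (x : Fin n → ℂ) :
    skewSchurEval lam ⊥ n (x ∘ (Equiv.swap p q)) = skewSchurEval lam ⊥ n x := by
  classical
  set v : ℕ := (p : ℕ) + 1 with hvdef
  have hv : 1 ≤ v := Nat.le_add_left 1 _
  have hv1n : v + 1 ≤ n := by
    have := q.2
    omega
  rw [skewSchurEval_eq_sum, skewSchurEval_eq_sum]
  apply Finset.sum_nbij' (i := fun T => BK.bk T v hv) (j := fun T => BK.bk T v hv)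
  · intro T hT
    exact mem_bddFinset.mpr (BK.bk_mem_bdd hv hv1n (mem_bddFinset.mp hT))
  · intro T hT
    exact mem_bddFinset.mpr (BK.bk_mem_bdd hv hv1n (mem_bddFinset.mp hT))
  · intro T _
    exact BK.bk_bk hv
  · intro T _
    exact BK.bk_bk hv
  · intro T _
    have hre : ∀ i : Fin n,
        (x ∘ Equiv.swap p q) i ^ T.wt ((i : ℕ) + 1)
          = (fun i : Fin n => x i ^ T.wt (((Equiv.swap p q i : Fin n) : ℕ) + 1))
              (Equiv.swap p q i) := by
      intro i
      simp only [Function.comp_apply, Equiv.swap_apply_self]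
    calc ∏ i : Fin n, (x ∘ Equiv.swap p q) i ^ T.wt ((i : ℕ) + 1)
        = ∏ i : Fin n,
            (fun i : Fin n => x i ^ T.wt (((Equiv.swap p q i : Fin n) : ℕ) + 1))
              (Equiv.swap p q i) := by
          exact Finset.prod_congr rfl fun i _ => hre i
      _ = ∏ i : Fin n, x i ^ T.wt (((Equiv.swap p q i : Fin n) : ℕ) + 1) :=
          Equiv.prod_comp (Equiv.swap p q)
            (fun j : Fin n => x j ^ T.wt (((Equiv.swap p q j : Fin n) : ℕ) + 1))
      _ = ∏ i : Fin n, x i ^ (BK.bk T v hv).wt ((i : ℕ) + 1) := by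
          apply Finset.prod_congr rfl
          intro i _
          congr 1
          by_cases hip : i = p
          · subst hip
            rw [Equiv.swap_apply_left, hpq, ← hvdef]
            exact (BK.wt_bk_v hv).symm
          by_cases hiq : i = q
          · subst hiq
            rw [Equiv.swap_apply_right]
            have hq1 : (i : ℕ) + 1 = v + 1 := by omega
            rw [hq1, ← hvdef]
            exact (BK.wt_bk_v1 hv).symm
          · rw [Equiv.swap_apply_of_ne_of_ne hip hiq]
            refine (BK.wt_bk_ne hv ?_ ?_).symm
            · intro h
              exact hip (Fin.ext (by omega))
            · intro h
              exact hiq (Fin.ext (by omega))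

lemma skewSchurEval_perm (lam : YoungDiagram) {n : ℕ} (σ : Equiv.Perm (Fin n))
    (x : Fin n → ℂ) :
    skewSchurEval lam ⊥ n (x ∘ σ) = skewSchurEval lam ⊥ n x := by
  rcases n with _ | n'
  · have hx : x ∘ σ = x := funext fun i => i.elim0
    rw [hx]
  · have key : ∀ τ ∈ Submonoid.closure
        (Set.range fun i : Fin n' => Equiv.swap i.castSucc i.succ),
        ∀ y : Fin (n' + 1) → ℂ,
          skewSchurEval lam ⊥ (n' + 1) (y ∘ τ) = skewSchurEval lam ⊥ (n' + 1) y := by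
      intro τ hτ
      induction hτ using Submonoid.closure_induction with
      | mem τ hτ' =>
          obtain ⟨i, rfl⟩ := hτ'
          intro y
          apply skewSchurEval_swap lam i.castSucc i.succ
          simp [Fin.val_succ]
      | one =>
          intro y
          have : y ∘ (1 : Equiv.Perm (Fin (n' + 1))) = y := rfl
          rw [this]
      | mul a b ha hb iha ihb =>
          intro y
          have hcomp : y ∘ (a * b) = (y ∘ a) ∘ b := by
            funext i
            simp [Equiv.Perm.mul_apply]
          rw [hcomp, ihb (y ∘ a), iha y]
    apply key σ ?_ x
    rw [Equiv.Perm.mclosure_swap_castSucc_succ]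
    trivial

lemma schur_vanish {n : ℕ} (hn : 0 < n) (lam : YoungDiagram) (ξ : ℂ)
    (hξ : IsPrimitiveRoot ξ n) (k : ℤ) (hndvd : ¬ (n : ℤ) ∣ k * (lam.card : ℤ)) :
    skewSchurEval lam ⊥ n (fun i => ξ ^ (((i : ℕ) : ℤ) * k)) = 0 := by
  obtain ⟨n', rfl⟩ : ∃ n', n = n' + 1 := ⟨n - 1, by omega⟩
  have hξ0 : ξ ≠ 0 := hξ.ne_zero (by omega)
  have hcong : ∀ a b : ℤ, ((n' + 1 : ℕ) : ℤ) ∣ (a - b) → ξ ^ a = ξ ^ b := by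
    intro a b hd
    have h1 : ξ ^ (a - b) = 1 := (hξ.zpow_eq_one_iff_dvd _).mpr hd
    calc ξ ^ a = ξ ^ (b + (a - b)) := by congr 1; ring
      _ = ξ ^ b * ξ ^ (a - b) := zpow_add₀ hξ0 _ _
      _ = ξ ^ b := by rw [h1, mul_one]
  set p : Fin (n' + 1) → ℂ := fun i => ξ ^ (((i : ℕ) : ℤ) * k) with hp
  have hrot : p ∘ (finRotate (n' + 1)) = fun i => ξ ^ k * p i := by
    funext i
    simp only [Function.comp_apply, finRotate_succ_apply, hp]
    have hval : ((i + 1 : Fin (n' + 1)) : ℕ) = ((i : ℕ) + 1) % (n' + 1) := by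
      rw [Fin.add_def]
      simp
    rw [hval]
    obtain ⟨qq, hq⟩ : ∃ qq, (i : ℕ) + 1 = (n' + 1) * qq + ((i : ℕ) + 1) % (n' + 1) :=
      ⟨((i : ℕ) + 1) / (n' + 1), by rw [Nat.div_add_mod]⟩
    have hrhs : ξ ^ k * ξ ^ (((i : ℕ) : ℤ) * k) = ξ ^ (k + ((i : ℕ) : ℤ) * k) :=
      (zpow_add₀ hξ0 _ _).symm
    rw [hrhs]
    apply hcong
    have hcast : (((((i : ℕ) + 1) % (n' + 1) : ℕ)) : ℤ)
        = (((i : ℕ) : ℤ) + 1) - ((n' + 1 : ℕ) : ℤ) * qq := by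
      have := congrArg (fun t : ℕ => (t : ℤ)) hq
      push_cast at this ⊢
      omega
    refine ⟨-(qq * k), ?_⟩
    rw [hcast]
    push_cast
    ring
  have h1 : skewSchurEval lam ⊥ (n' + 1) p
      = skewSchurEval lam ⊥ (n' + 1) (p ∘ finRotate (n' + 1)) :=
    (skewSchurEval_perm lam (finRotate (n' + 1)) p).symm
  rw [hrot, skewSchurEval_smul lam (Nat.succ_pos n') (ξ ^ k) p] at h1
  have h2 : ((ξ ^ k) ^ lam.card - 1) * skewSchurEval lam ⊥ (n' + 1) p = 0 := by
    rw [sub_mul, one_mul, ← h1, sub_self]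
  rcases mul_eq_zero.mp h2 with h3 | h3
  · exfalso
    rw [sub_eq_zero] at h3
    rw [← zpow_natCast (ξ ^ k) lam.card, ← zpow_mul] at h3
    exact hndvd ((hξ.zpow_eq_one_iff_dvd _).mp h3)
  · exact h3

/-- If `f` is a nonnegative-integer combination of Schur polynomials `s_λ` over partitions
`λ ⊢ m` (a Schur-positive homogeneous symmetric polynomial of degree `m` in `n` variables),
`gcd(m, n) = 1`, and `ξ` is a primitive `n`-th root of unity, then
`f(1, ξ^k, ξ^{2k}, …, ξ^{(n−1)k}) = 0` for every integer `k` with `n ∤ k`. -/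
theorem schur_positive_vanishes (m n : ℕ) (hm : 0 < m) (hn : 0 < n)
    (hgcd : Nat.gcd m n = 1)
    (D : Finset YoungDiagram) (hD : ∀ μ ∈ D, μ.card = m) (d : YoungDiagram → ℕ)
    (f : (Fin n → ℂ) → ℂ)
    (hf : ∀ x : Fin n → ℂ, f x = ∑ μ ∈ D, (d μ : ℂ) * skewSchurEval μ ⊥ n x)
    (ξ : ℂ) (hξ : IsPrimitiveRoot ξ n) :
    ∀ k : ℤ, ¬ (n : ℤ) ∣ k → f (fun i => ξ ^ (((i : ℕ) : ℤ) * k)) = 0 := by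
  intro k hk
  rw [hf]
  apply Finset.sum_eq_zero
  intro μ hμ
  have hcard := hD μ hμ
  have hvan : skewSchurEval μ ⊥ n (fun i => ξ ^ (((i : ℕ) : ℤ) * k)) = 0 := by
    apply schur_vanish hn μ ξ hξ k
    rw [hcard]
    intro hdvd
    apply hk
    apply Int.dvd_of_dvd_mul_left_of_gcd_one hdvd
    rw [Int.gcd_natCast_natCast, Nat.gcd_comm]
    exact hgcd
  rw [hvan, mul_zero]
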